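/- cof(B_M) ≤ 𝔡: there exists a family C of meager downward-closed subsets of [ω]^ω with |C| ≤ 𝔡 such that every meager downward-closed subset of [ω]^ω is included in some member of C. -/

import Mathlib

open Set Cardinal MeasureTheory

/-- The characteristic function of a set of naturals, as a point of Cantor space `2^ω`. -/
noncomputable def chi (x : Set ℕ) : ℕ → Bool := fun n => @decide (n ∈ x) (Classical.dec _)

/-- `[ω]^ω`: the collection of infinite subsets of ω. -/
def InfSets : Set (Set ℕ) := {x : Set ℕ | x.Infinite}

/-- `X ⊆ [ω]^ω` is downward closed for almost-inclusion `x ≤ y ↔ (x \ y).Finite`. -/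
def DownClosed (X : Set (Set ℕ)) : Prop :=
  ∀ y ∈ X, ∀ x : Set ℕ, x.Infinite → (x \ y).Finite → x ∈ X

/-- `X` is meager as a subset of Cantor space `2^ω` (product topology on `ℕ → Bool`). -/
def MeagerSet (X : Set (Set ℕ)) : Prop := IsMeagre (chi '' X)

/-- A partition of ω into consecutive finite intervals `I n = [e n, e (n+1))`. -/
structure IntervalPartition where
  e : ℕ → ℕ
  zero : e 0 = 0
  mono : StrictMono e

/-- The `n`-th interval of an interval partition. -/
def IntervalPartition.I (P : IntervalPartition) (n : ℕ) : Set ℕ :=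
  Set.Ico (P.e n) (P.e (n + 1))

/-- `X ⊆ [ω]^ω` is groupwise dense: downward closed, and for every partition of ω into
finite intervals, the union of some infinitely many of the intervals belongs to `X`. -/
def GroupwiseDense (X : Set (Set ℕ)) : Prop :=
  X ⊆ InfSets ∧ DownClosed X ∧
    ∀ P : IntervalPartition, ∃ A : Set ℕ, A.Infinite ∧ (⋃ n ∈ A, P.I n) ∈ X

/-- `g` eventually majorizes `f`. -/
def EvMaj (f g : ℕ → ℕ) : Prop := ∀ᶠ k in Filter.atTop, f k ≤ g k

/-- `M(Π)`: the infinite subsets of ω including only finitely many intervals of `Π`. -/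
def MSet (P : IntervalPartition) : Set (Set ℕ) :=
  {x : Set ℕ | x.Infinite ∧ {n : ℕ | P.I n ⊆ x}.Finite}

/-- The index `n` of the interval `I n` of `P` containing `k`. -/
def idx (P : IntervalPartition) (k : ℕ) : ℕ := Nat.findGreatest (fun n => P.e n ≤ k) k

/-- `F_Π(k)`: the largest element of `I (n+2)`, where `k ∈ I n`. -/
def FPart (P : IntervalPartition) (k : ℕ) : ℕ := P.e (idx P k + 3) - 1

/-- The groupwise density number 𝔤. -/
noncomputable def gNum : Cardinal :=
  sInf {c : Cardinal | ∃ S : Set (Set (Set ℕ)), (∀ G ∈ S, GroupwiseDense G) ∧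
    #S = c ∧ InfSets ∩ ⋂₀ S = ∅}

/-- The bounding number 𝔟. -/
noncomputable def bNum : Cardinal :=
  sInf {c : Cardinal | ∃ F : Set (ℕ → ℕ), #F = c ∧ ∀ g : ℕ → ℕ, ∃ f ∈ F, ¬ EvMaj f g}

/-- The dominating number 𝔡. -/
noncomputable def dNum : Cardinal :=
  sInf {c : Cardinal | ∃ F : Set (ℕ → ℕ), #F = c ∧ ∀ g : ℕ → ℕ, ∃ f ∈ F, EvMaj g f}

/-- `B_M`: the ideal of meager downward-closed subsets of `[ω]^ω`. -/
def BM : Set (Set (Set ℕ)) := {X : Set (Set ℕ) | X ⊆ InfSets ∧ DownClosed X ∧ MeagerSet X}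

/-- `add(B_M)`. -/
noncomputable def addBM : Cardinal :=
  sInf {c : Cardinal | ∃ S : Set (Set (Set ℕ)), S ⊆ BM ∧ #S = c ∧ ⋃₀ S ∉ BM}

/-- `cov(B_M)`. -/
noncomputable def covBM : Cardinal :=
  sInf {c : Cardinal | ∃ S : Set (Set (Set ℕ)), S ⊆ BM ∧ #S = c ∧
    {x : Set ℕ | x.Infinite ∧ xᶜ.Infinite} ⊆ ⋃₀ S}

/-- `unif(B_M)`. -/
noncomputable def unifBM : Cardinal :=
  sInf {c : Cardinal | ∃ S : Set (Set ℕ), (∀ x ∈ S, x.Infinite ∧ xᶜ.Infinite) ∧ #S = c ∧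
    ∀ X ∈ BM, ¬ S ⊆ X}

/-- `cof(B_M)`. -/
noncomputable def cofBM : Cardinal :=
  sInf {c : Cardinal | ∃ C : Set (Set (Set ℕ)), C ⊆ BM ∧ #C = c ∧
    ∀ X ∈ BM, ∃ Y ∈ C, X ⊆ Y}

/-- `X ⊆ [ω]^ω` is dense: every infinite `A` has an infinite subset `B ∈ X`. -/
def DenseM (X : Set (Set ℕ)) : Prop :=
  ∀ A : Set ℕ, A.Infinite → ∃ B ⊆ A, B.Infinite ∧ B ∈ X

/-- 𝔤′: the least number of non-meager downward-closed ideals on ω with empty intersection. -/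
noncomputable def gNum' : Cardinal :=
  sInf {c : Cardinal | ∃ S : Set (Set (Set ℕ)),
    (∀ X ∈ S, X ⊆ InfSets ∧ DownClosed X ∧ (∀ x ∈ X, ∀ y ∈ X, x ∪ y ∈ X) ∧ ¬ MeagerSet X) ∧
    #S = c ∧ InfSets ∩ ⋂₀ S = ∅}

/-- The splitting number 𝔰. -/
noncomputable def sNum : Cardinal :=
  sInf {c : Cardinal | ∃ S : Set (Set ℕ), #S = c ∧
    ∀ x : Set ℕ, x.Infinite → ∃ y ∈ S, (x ∩ y).Infinite ∧ (x \ y).Infinite}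

set_option linter.unusedSectionVars false

namespace S7

lemma chi_eq_true {x : Set ℕ} {k : ℕ} : chi x k = true ↔ k ∈ x := by
  simp [chi]

lemma chi_eq_false {x : Set ℕ} {k : ℕ} : chi x k = false ↔ k ∉ x := by
  simp [chi]

lemma infinite_of_unbdd {s : Set ℕ} (h : ∀ B, ∃ n ∈ s, B < n) : s.Infinite := by
  intro hfin
  rcases hfin.bddAbove with ⟨B, hB⟩
  rcases h B with ⟨n, hn, hBn⟩
  exact absurd (hB hn) (by omega)

lemma exists_gt_of_infinite {s : Set ℕ} (h : s.Infinite) (B : ℕ) : ∃ n ∈ s, B < n := by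
  by_contra hc
  push_neg at hc
  exact h (Set.Finite.subset (Set.finite_Iic B) (fun n hn => hc n hn))

lemma e_le_self (P : IntervalPartition) (n : ℕ) : n ≤ P.e n := P.mono.le_apply

lemma idx_le (P : IntervalPartition) (k : ℕ) : P.e (idx P k) ≤ k := by
  have h0 : P.e 0 ≤ k := by rw [P.zero]; omega
  exact Nat.findGreatest_spec (P := fun n => P.e n ≤ k) (Nat.zero_le k) h0

lemma lt_idx_succ (P : IntervalPartition) (k : ℕ) : k < P.e (idx P k + 1) := by
  by_contra hc
  push_neg at hc
  have h1 : idx P k + 1 ≤ k := le_trans (e_le_self P _) hc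
  exact Nat.findGreatest_is_greatest (P := fun n => P.e n ≤ k) (Nat.lt_succ_self _) h1 hc

/-- Cylinders in Cantor space. -/
def Cyl (σ : ℕ → Bool) (N : ℕ) : Set (ℕ → Bool) := {f | ∀ k < N, f k = σ k}

lemma self_mem_cyl (σ : ℕ → Bool) (N : ℕ) : σ ∈ Cyl σ N := fun _ _ => rfl

lemma cyl_mono {σ : ℕ → Bool} {M M' : ℕ} (h : M ≤ M') : Cyl σ M' ⊆ Cyl σ M :=
  fun _ hf k hk => hf k (lt_of_lt_of_le hk h)

lemma isOpen_cyl (σ : ℕ → Bool) (N : ℕ) : IsOpen (Cyl σ N) := by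
  have : Cyl σ N = ⋂ k ∈ Finset.range N, {f : ℕ → Bool | f k = σ k} := by
    ext f; simp [Cyl]
  rw [this]
  apply isOpen_biInter_finset
  intro k _
  have he : {f : ℕ → Bool | f k = σ k} = (fun f : ℕ → Bool => f k) ⁻¹' {σ k} := rfl
  rw [he]
  exact (isOpen_discrete _).preimage (continuous_apply k)

lemma escape_one {U : Set (ℕ → Bool)} (hU : IsOpen U) (hd : Dense U) (σ : ℕ → Bool) (N : ℕ) :
    ∃ M τ, N < M ∧ (∀ k < N, τ k = σ k) ∧ Cyl τ M ⊆ U := by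
  obtain ⟨f, hfU, hfC⟩ := hd.exists_mem_open (isOpen_cyl σ N) ⟨σ, self_mem_cyl σ N⟩
  obtain ⟨I, u, hIu, hpi⟩ := isOpen_pi_iff.mp hU f hfU
  refine ⟨max (N + 1) (I.sup id + 1), f, lt_of_lt_of_le (Nat.lt_succ_self N) (le_max_left _ _),
    fun k hk => hfC k hk, fun g hg => hpi ?_⟩
  intro a ha
  have haM : a < max (N + 1) (I.sup id + 1) := by
    have := Finset.le_sup (f := id) ha
    simp only [id] at this
    omega
  rw [hg a haM]
  exact (hIu a ha).2

lemma escape_all {U : Set (ℕ → Bool)} (hU : IsOpen U) (hd : Dense U) (N : ℕ) :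
    ∃ M, N < M ∧ ∀ σ : ℕ → Bool, ∃ τ, (∀ k < N, τ k = σ k) ∧ Cyl τ M ⊆ U := by
  have h : ∀ s : Fin N → Bool, ∃ M τ, N < M ∧
      (∀ k < N, τ k = (fun k => if h : k < N then s ⟨k, h⟩ else false) k) ∧ Cyl τ M ⊆ U :=
    fun s => escape_one hU hd _ N
  choose Ms τs h1 h2 h3 using h
  refine ⟨(Finset.univ.sup Ms) + N + 1, by omega, fun σ => ?_⟩
  set s : Fin N → Bool := fun i => σ i with hs
  refine ⟨τs s, fun k hk => ?_, ?_⟩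
  · rw [h2 s k hk]
    simp [hk, hs]
  · exact subset_trans (cyl_mono (by
      have := Finset.le_sup (f := Ms) (Finset.mem_univ s); omega)) (h3 s)

end S7

namespace S7

lemma mset_dc (P : IntervalPartition) : DownClosed (MSet P) := by
  rintro y ⟨-, hyf⟩ x hxi hdf
  refine ⟨hxi, ?_⟩
  have hsub : {n : ℕ | P.I n ⊆ x} ⊆ {n : ℕ | P.I n ⊆ y} ∪ ⋃ k ∈ x \ y, {n : ℕ | k ∈ P.I n} := by
    intro n hn
    by_cases hny : P.I n ⊆ y
    · exact Or.inl hny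
    · right
      obtain ⟨k, hkI, hky⟩ := not_subset.mp hny
      exact Set.mem_biUnion ⟨hn hkI, hky⟩ hkI
  refine Set.Finite.subset (Set.Finite.union hyf (Set.Finite.biUnion hdf ?_)) hsub
  intro k _
  refine Set.Finite.subset (Set.finite_Iic k) ?_
  intro n hn
  exact le_trans (e_le_self P n) hn.1

lemma mset_inf (P : IntervalPartition) : MSet P ⊆ InfSets := fun _ hx => hx.1

/-- the `m`-th closed nowhere dense piece covering `MSet P` -/
def AP (P : IntervalPartition) (m : ℕ) : Set (ℕ → Bool) :=
  {f : ℕ → Bool | ∀ n, m ≤ n → ∃ k, k ∈ P.I n ∧ f k = false}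

lemma isClosed_AP (P : IntervalPartition) (m : ℕ) : IsClosed (AP P m) := by
  have : AP P m = ⋂ n, {f : ℕ → Bool | m ≤ n → ∃ k, k ∈ P.I n ∧ f k = false} := by
    ext f; simp [AP]
  rw [this]
  apply isClosed_iInter
  intro n
  by_cases hmn : m ≤ n
  · have he : {f : ℕ → Bool | m ≤ n → ∃ k, k ∈ P.I n ∧ f k = false}
        = ⋃ k ∈ Finset.Ico (P.e n) (P.e (n+1)), {f : ℕ → Bool | f k = false} := by
      ext f
      simp only [Set.mem_setOf_eq, Set.mem_iUnion, Finset.mem_Ico, IntervalPartition.I,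
        Set.mem_Ico, exists_prop]
      constructor
      · rintro h; obtain ⟨k, hk1, hk2⟩ := h hmn; exact ⟨k, hk1, hk2⟩
      · rintro ⟨k, hk1, hk2⟩ _; exact ⟨k, hk1, hk2⟩
    rw [he]
    apply Set.Finite.isClosed_biUnion (Finset.finite_toSet _)
    intro k _
    have : {f : ℕ → Bool | f k = false} = (fun f : ℕ → Bool => f k) ⁻¹' {false} := rfl
    rw [this]
    exact (isClosed_discrete _).preimage (continuous_apply k)
  · have he : {f : ℕ → Bool | m ≤ n → ∃ k, k ∈ P.I n ∧ f k = false} = Set.univ := by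
      ext f; simp [hmn]
    rw [he]; exact isClosed_univ

lemma interior_AP (P : IntervalPartition) (m : ℕ) : interior (AP P m) = ∅ := by
  by_contra hne
  obtain ⟨f, hf⟩ := Set.nonempty_iff_ne_empty.mpr hne
  obtain ⟨I, u, hIu, hpi⟩ := isOpen_pi_iff.mp isOpen_interior f hf
  set n := max m (I.sup id + 1) with hn
  set g : ℕ → Bool := fun k => if P.e n ≤ k then true else f k with hg
  have hgpi : g ∈ (I : Set ℕ).pi u := by
    intro a ha
    have ha1 : a ≤ I.sup id := Finset.le_sup (f := id) ha
    have ha2 : a < P.e n := by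
      have := e_le_self P n
      omega
    have : g a = f a := by rw [hg]; simp [not_le.mpr ha2]
    rw [this]
    exact (hIu a ha).2
  have hgA : g ∈ AP P m := interior_subset (hpi hgpi)
  obtain ⟨k, hkI, hkf⟩ := hgA n (le_max_left _ _)
  have : g k = true := by rw [hg]; simp [hkI.1]
  rw [this] at hkf
  simp at hkf

lemma mset_meager (P : IntervalPartition) : MeagerSet (MSet P) := by
  rw [MeagerSet, isMeagre_iff_countable_union_isNowhereDense]
  refine ⟨Set.range (AP P), ?_, Set.countable_range _, ?_⟩
  · rintro t ⟨m, rfl⟩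
    rw [(isClosed_AP P m).isNowhereDense_iff]
    exact interior_AP P m
  · rintro f ⟨x, hx, rfl⟩
    obtain ⟨B, hB⟩ := hx.2.bddAbove
    refine Set.mem_sUnion.mpr ⟨AP P (B + 1), ⟨B + 1, rfl⟩, ?_⟩
    intro n hn
    have hnx : ¬ P.I n ⊆ x := by
      intro hc
      have := hB hc
      omega
    obtain ⟨k, hk1, hk2⟩ := not_subset.mp hnx
    exact ⟨k, hk1, chi_eq_false.mpr hk2⟩

/-- partition generated by `g` -/
def pe (g : ℕ → ℕ) : ℕ → ℕ
  | 0 => 0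
  | n + 1 => max (g (pe g n)) (pe g n) + 1

def Pg (g : ℕ → ℕ) : IntervalPartition :=
  ⟨pe g, rfl, strictMono_nat_of_lt_succ fun n => by simp [pe]⟩

lemma mset_mono (P : IntervalPartition) (g : ℕ → ℕ)
    (hev : EvMaj (fun k => P.e (idx P k + 2)) g) : MSet P ⊆ MSet (Pg g) := by
  rintro x ⟨hxi, hxf⟩
  refine ⟨hxi, ?_⟩
  by_contra hinf
  have hS : {n : ℕ | (Pg g).I n ⊆ x}.Infinite := hinf
  obtain ⟨K, hK⟩ := Filter.eventually_atTop.mp hev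
  refine (infinite_of_unbdd ?_) hxf
  intro B
  obtain ⟨n, hnS, hngt⟩ := exists_gt_of_infinite hS (max K (P.e B))
  set k := pe g n with hk
  have hkn : n ≤ k := e_le_self (Pg g) n
  have hkK : K ≤ k := by omega
  have hkB : P.e B ≤ k := by omega
  set j := idx P k with hj
  have hj1 : P.e j ≤ k := idx_le P k
  have hj2 : k < P.e (j + 1) := lt_idx_succ P k
  have hgk : P.e (j + 2) ≤ g k := hK k hkK
  have hIsub : P.I (j + 1) ⊆ (Pg g).I n := by
    intro m hm
    rcases hm with ⟨hm1, hm2⟩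
    constructor
    · exact le_trans (le_of_lt hj2) hm1
    · show m < pe g (n + 1)
      have h1 : pe g (n + 1) = max (g k) k + 1 := by rw [hk]; rfl
      have h2 : P.e (j + 1 + 1) = P.e (j + 2) := by norm_num
      omega
  refine ⟨j + 1, subset_trans hIsub hnS, ?_⟩
  have : P.e B < P.e (j + 1) := by omega
  exact Nat.lt_of_lt_of_le (by omega : B < B + 1) (by
    by_contra hc
    push_neg at hc
    have := P.mono.lt_iff_lt.mp this
    omega)

end S7

namespace S7

section Stages

variable (e pick : ℕ → ℕ) (τf : ℕ → ℕ → (ℕ → Bool) → ℕ → Bool)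

/-- One stage of the generic-real construction. -/
def stageStep (j : ℕ) (p : ℕ × (ℕ → Bool)) : ℕ × (ℕ → Bool) :=
  let n := pick (max p.1 j)
  let t := τf n (e n) (fun k => if k < p.1 then p.2 k else false)
  let n' := pick n
  (e n' + 1, fun k => if k < e (n + 1) then t k else decide (k = e n'))

def stages : ℕ → ℕ × (ℕ → Bool)
  | 0 => (0, fun _ => false)
  | j + 1 => stageStep e pick τf j (stages j)

def Lg (j : ℕ) : ℕ := (stages e pick τf j).1

def σg (j : ℕ) : ℕ → Bool := (stages e pick τf j).2

def njg (j : ℕ) : ℕ := pick (max (Lg e pick τf j) j)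

def n'g (j : ℕ) : ℕ := pick (njg e pick τf j)

def tg (j : ℕ) : ℕ → Bool :=
  τf (njg e pick τf j) (e (njg e pick τf j))
    (fun k => if k < Lg e pick τf j then σg e pick τf j k else false)

def yg : Set ℕ := {k | ∃ j, σg e pick τf j k = true}

lemma Lg_succ (j : ℕ) : Lg e pick τf (j + 1) = e (n'g e pick τf j) + 1 := rfl

lemma σg_succ (j k : ℕ) : σg e pick τf (j + 1) k =
    (if k < e (njg e pick τf j + 1) then tg e pick τf j k
    else decide (k = e (n'g e pick τf j))) := rfl

variable (hem : StrictMono e) (hpickgt : ∀ B, B < pick B)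
  (hτ1 : ∀ n N σ, ∀ k < N, τf n N σ k = σ k)

include hem hpickgt

lemma Lg_lt_e_nj (j : ℕ) : Lg e pick τf j ≤ e (njg e pick τf j) := by
  have h1 : max (Lg e pick τf j) j < njg e pick τf j := hpickgt _
  have h2 := hem.le_apply (x := njg e pick τf j)
  omega

lemma j_lt_nj (j : ℕ) : j < njg e pick τf j := by
  have h1 : max (Lg e pick τf j) j < njg e pick τf j := hpickgt _
  omega

lemma e_nj_succ_le (j : ℕ) : e (njg e pick τf j + 1) ≤ e (n'g e pick τf j) := by
  have h1 : njg e pick τf j < n'g e pick τf j := hpickgt _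
  exact hem.monotone (by omega)

lemma Lg_lt_succ (j : ℕ) : Lg e pick τf j < Lg e pick τf (j + 1) := by
  have h1 := Lg_lt_e_nj e pick τf hem hpickgt j
  have h2 : e (njg e pick τf j) < e (njg e pick τf j + 1) := hem (by omega)
  have h3 := e_nj_succ_le e pick τf hem hpickgt j
  rw [Lg_succ]
  omega

lemma Lg_strictMono : StrictMono (Lg e pick τf) :=
  strictMono_nat_of_lt_succ (Lg_lt_succ e pick τf hem hpickgt)

include hτ1

lemma coh_step (j : ℕ) : ∀ k < Lg e pick τf j, σg e pick τf (j + 1) k = σg e pick τf j k := by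
  intro k hk
  have h1 := Lg_lt_e_nj e pick τf hem hpickgt j
  have h2 : e (njg e pick τf j) < e (njg e pick τf j + 1) := hem (by omega)
  rw [σg_succ, if_pos (by omega : k < e (njg e pick τf j + 1))]
  rw [tg, hτ1 _ _ _ k (by omega), if_pos hk]

lemma coh (j j' : ℕ) (h : j ≤ j') : ∀ k < Lg e pick τf j, σg e pick τf j' k = σg e pick τf j k := by
  induction j', h using Nat.le_induction with
  | base => intro k _; rfl
  | succ j' hj ih =>
      intro k hk
      have hk' : k < Lg e pick τf j' :=
        lt_of_lt_of_le hk ((Lg_strictMono e pick τf hem hpickgt).monotone hj)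
      rw [coh_step e pick τf hem hpickgt hτ1 j' k hk', ih k hk]

variable {x : Set ℕ} (hpx : ∀ B, Set.Ico (e (pick B)) (e (pick B + 1)) ⊆ x)

include hpx

lemma trueness (j : ℕ) : ∀ k, σg e pick τf j k = true → k < Lg e pick τf j ∧ k ∈ x := by
  induction j with
  | zero => intro k hk; exact absurd hk (by simp [σg, stages])
  | succ j ih =>
      intro k hk
      have hL1 := Lg_lt_e_nj e pick τf hem hpickgt j
      have hL2 : e (njg e pick τf j) < e (njg e pick τf j + 1) := hem (by omega)
      have hL3 := e_nj_succ_le e pick τf hem hpickgt j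
      rw [σg_succ e pick τf j k] at hk
      by_cases h1 : k < e (njg e pick τf j + 1)
      · rw [if_pos h1] at hk
        by_cases h2 : k < e (njg e pick τf j)
        · rw [tg, hτ1 _ _ _ k h2] at hk
          by_cases h3 : k < Lg e pick τf j
          · rw [if_pos h3] at hk
            obtain ⟨_, hkx⟩ := ih k hk
            refine ⟨by rw [Lg_succ]; omega, hkx⟩
          · rw [if_neg h3] at hk
            exact absurd hk (by simp)
        · refine ⟨by rw [Lg_succ]; omega, ?_⟩
          have hd : njg e pick τf j = pick (max (Lg e pick τf j) j) := rfl
          refine hpx (max (Lg e pick τf j) j) ⟨?_, ?_⟩ <;> rw [← hd] <;> omega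
      · rw [if_neg h1] at hk
        have hk' : k = e (n'g e pick τf j) := by simpa using hk
        have h4 : e (n'g e pick τf j) < e (n'g e pick τf j + 1) := hem (by omega)
        refine ⟨by rw [Lg_succ]; omega, ?_⟩
        rw [hk']
        exact hpx (njg e pick τf j) ⟨le_rfl, h4⟩

lemma yg_mem_iff (j : ℕ) (k : ℕ) (hk : k < Lg e pick τf j) :
    k ∈ yg e pick τf ↔ σg e pick τf j k = true := by
  constructor
  · rintro ⟨j', hj'⟩
    rcases le_total j j' with h | h
    · rw [← coh e pick τf hem hpickgt hτ1 j j' h k hk]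
      exact hj'
    · have hkj' : k < Lg e pick τf j' := (trueness e pick τf hem hpickgt hτ1 hpx j' k hj').1
      rw [coh e pick τf hem hpickgt hτ1 j' j h k hkj']
      exact hj'
  · intro h; exact ⟨j, h⟩

lemma yg_subset : yg e pick τf ⊆ x := by
  rintro k ⟨j, hj⟩
  exact (trueness e pick τf hem hpickgt hτ1 hpx j k hj).2

lemma e_n'g_mem (j : ℕ) : e (n'g e pick τf j) ∈ yg e pick τf := by
  refine ⟨j + 1, ?_⟩
  have hL3 := e_nj_succ_le e pick τf hem hpickgt j
  rw [σg_succ e pick τf j (e (n'g e pick τf j)), if_neg (by omega)]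
  simp

lemma yg_infinite : (yg e pick τf).Infinite := by
  apply infinite_of_unbdd
  intro B
  refine ⟨e (n'g e pick τf B), e_n'g_mem e pick τf hem hpickgt hτ1 hpx B, ?_⟩
  have h1 : B < njg e pick τf B := j_lt_nj e pick τf hem hpickgt B
  have h2 : njg e pick τf B < n'g e pick τf B := hpickgt _
  have h3 := hem.le_apply (x := n'g e pick τf B)
  omega

lemma chi_yg_cyl (j : ℕ) : chi (yg e pick τf) ∈ Cyl (tg e pick τf j) (e (njg e pick τf j + 1)) := by
  intro k hk
  have hL3 := e_nj_succ_le e pick τf hem hpickgt j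
  have hkL : k < Lg e pick τf (j + 1) := by rw [Lg_succ]; omega
  have h1 : k ∈ yg e pick τf ↔ σg e pick τf (j + 1) k = true :=
    yg_mem_iff e pick τf hem hpickgt hτ1 hpx (j + 1) k hkL
  have h2 : σg e pick τf (j + 1) k = tg e pick τf j k := by
    rw [σg_succ e pick τf j k, if_pos hk]
  rw [h2] at h1
  cases h : tg e pick τf j k
  · refine chi_eq_false.mpr (fun hm => ?_)
    rw [h] at h1
    simpa using h1.mp hm
  · exact chi_eq_true.mpr (h1.mpr h)

end Stages

end S7

namespace S7

lemma talagrand {X : Set (Set ℕ)} (hX : X ⊆ InfSets) (hdc : DownClosed X)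
    (hm : MeagerSet X) : ∃ P : IntervalPartition, X ⊆ MSet P := by
  have hres : (chi '' X)ᶜ ∈ residual (ℕ → Bool) := hm
  obtain ⟨t, hts, hGδ, htd⟩ := mem_residual.mp hres
  obtain ⟨T, hTo, hTc, hTeq⟩ := hGδ
  obtain ⟨U, hUrange⟩ := Set.Countable.exists_eq_range (hTc.insert Set.univ)
    ⟨Set.univ, Set.mem_insert _ _⟩
  have hUmem : ∀ i, U i = Set.univ ∨ U i ∈ T := by
    intro i
    have : U i ∈ insert Set.univ T := by rw [hUrange]; exact ⟨i, rfl⟩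
    simpa using this
  have hUo : ∀ i, IsOpen (U i) := by
    intro i; rcases hUmem i with h | h
    · rw [h]; exact isOpen_univ
    · exact hTo _ h
  have htsub : ∀ i, t ⊆ U i := by
    intro i; rcases hUmem i with h | h
    · rw [h]; exact Set.subset_univ t
    · rw [hTeq]; exact Set.sInter_subset_of_mem h
  have hUd : ∀ i, Dense (U i) := fun i => htd.mono (htsub i)
  set W : ℕ → Set (ℕ → Bool) := fun n => Nat.rec (U 0) (fun n ih => ih ∩ U (n + 1)) n with hWdef
  have hWsucc : ∀ n, W (n + 1) = W n ∩ U (n + 1) := fun n => rfl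
  have hWo : ∀ n, IsOpen (W n) := by
    intro n; induction n with
    | zero => exact hUo 0
    | succ n ih => rw [hWsucc]; exact ih.inter (hUo (n + 1))
  have hWd : ∀ n, Dense (W n) := by
    intro n; induction n with
    | zero => exact hUd 0
    | succ n ih => rw [hWsucc]; exact ih.inter_of_isOpen_left (hUd (n + 1)) (hWo n)
  have hWsub : ∀ i n, i ≤ n → W n ⊆ U i := by
    intro i n hin
    induction n with
    | zero =>
        have : i = 0 := by omega
        rw [this]; exact subset_rfl
    | succ n ih =>
        rcases Nat.lt_or_ge i (n + 1) with h | h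
        · rw [hWsucc]; exact subset_trans Set.inter_subset_left (ih (by omega))
        · have : i = n + 1 := by omega
          rw [this, hWsucc]; exact Set.inter_subset_right
  have hesc : ∀ n N, ∃ M, N < M ∧ ∀ σ : ℕ → Bool, ∃ τ, (∀ k < N, τ k = σ k) ∧ Cyl τ M ⊆ W n :=
    fun n N => escape_all (hWo n) (hWd n) N
  choose M hMgt hMτ using hesc
  choose τf hτa hτb using hMτ
  set e : ℕ → ℕ := fun n => Nat.rec 0 (fun n ih => M n ih) n with hedef
  have hes : ∀ n, e (n + 1) = M n (e n) := fun n => rfl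
  have hem : StrictMono e := strictMono_nat_of_lt_succ fun n => by
    rw [hes]; exact hMgt n (e n)
  have he0 : e 0 = 0 := rfl
  refine ⟨⟨e, he0, hem⟩, ?_⟩
  intro x hx
  refine ⟨hX hx, ?_⟩
  by_contra hfin
  have hA : {n : ℕ | IntervalPartition.I ⟨e, he0, hem⟩ n ⊆ x}.Infinite := hfin
  have hpick : ∀ B : ℕ, ∃ n, (Set.Ico (e n) (e (n + 1)) ⊆ x) ∧ B < n := by
    intro B
    obtain ⟨n, hn, hBn⟩ := exists_gt_of_infinite hA B
    exact ⟨n, hn, hBn⟩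
  choose pick hpickA hpickgt using hpick
  have hpx : ∀ B, Set.Ico (e (pick B)) (e (pick B + 1)) ⊆ x := fun B => hpickA B
  have hy_inf := yg_infinite e pick τf hem hpickgt hτa hpx
  have hy_sub := yg_subset e pick τf hem hpickgt hτa hpx
  have hyX : yg e pick τf ∈ X := by
    refine hdc x hx _ hy_inf ?_
    have : yg e pick τf \ x = ∅ := by rw [Set.diff_eq_empty]; exact hy_sub
    rw [this]; exact Set.finite_empty
  have hWy : ∀ j, chi (yg e pick τf) ∈ W (njg e pick τf j) := by
    intro j
    have hc := chi_yg_cyl e pick τf hem hpickgt hτa hpx j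
    have hsub : Cyl (tg e pick τf j) (e (njg e pick τf j + 1)) ⊆ W (njg e pick τf j) := by
      rw [hes]
      exact hτb _ _ _
    exact hsub hc
  have hUy : ∀ i, chi (yg e pick τf) ∈ U i := by
    intro i
    exact hWsub i _ (le_of_lt (j_lt_nj e pick τf hem hpickgt i)) (hWy i)
  have hty : chi (yg e pick τf) ∈ t := by
    rw [hTeq]
    intro s hs
    have hmem : s ∈ insert Set.univ T := Set.mem_insert_of_mem _ hs
    rw [hUrange] at hmem
    obtain ⟨i, rfl⟩ := hmem
    exact hUy i
  exact (hts hty) (Set.mem_image_of_mem chi hyX)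

end S7


/-- cof(B_M) ≤ 𝔡. -/
theorem stmt7 :
    ∃ C : Set (Set (Set ℕ)), #C ≤ dNum ∧
      (∀ Y ∈ C, Y ⊆ InfSets ∧ DownClosed Y ∧ MeagerSet Y) ∧
      ∀ X : Set (Set ℕ), X ⊆ InfSets → DownClosed X → MeagerSet X → ∃ Y ∈ C, X ⊆ Y := by
  have hne : {c : Cardinal | ∃ F : Set (ℕ → ℕ), #F = c ∧ ∀ g : ℕ → ℕ, ∃ f ∈ F, EvMaj g f}.Nonempty := by
    refine ⟨#(Set.univ : Set (ℕ → ℕ)), Set.univ, rfl, fun g => ⟨g, Set.mem_univ g, ?_⟩⟩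
    exact Filter.Eventually.of_forall fun k => le_rfl
  obtain ⟨F, hFcard, hFdom⟩ := csInf_mem hne
  refine ⟨(fun g => MSet (S7.Pg g)) '' F, ?_, ?_, ?_⟩
  · calc #((fun g => MSet (S7.Pg g)) '' F) ≤ #F := Cardinal.mk_image_le
    _ = dNum := hFcard
  · rintro Y ⟨g, -, rfl⟩
    exact ⟨S7.mset_inf _, S7.mset_dc _, S7.mset_meager _⟩
  · intro X hX hdc hm
    obtain ⟨P, hP⟩ := S7.talagrand hX hdc hm
    obtain ⟨g, hgF, hgd⟩ := hFdom (fun k => P.e (idx P k + 2))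
    exact ⟨MSet (S7.Pg g), ⟨g, hgF, rfl⟩, subset_trans hP (S7.mset_mono P g hgd)⟩
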